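/- Let x ∈ ℝ^n with ‖x‖₂ = 1, ‖x‖₀ = k, and let λ ∈ ℝ. Then the Frobenius norm of X₀ = λ x xᵀ + P_T(sgn(x)sgn(x)ᵀ) satisfies ‖X₀‖_F ≤ λ + ‖x‖₁² + 2√k ‖x‖₁, provided λ ≥ 0. -/

import Mathlib

open Matrix

private lemma sqrt_sum_tri {ι : Type*} [Fintype ι] (f g : ι → ℝ) :
    Real.sqrt (∑ p, (f p + g p) ^ 2) ≤
      Real.sqrt (∑ p, f p ^ 2) + Real.sqrt (∑ p, g p ^ 2) := by
  have h := norm_add_le ((WithLp.equiv 2 (ι → ℝ)).symm f) ((WithLp.equiv 2 (ι → ℝ)).symm g)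
  simp only [EuclideanSpace.norm_eq, WithLp.equiv_symm_apply, PiLp.toLp_apply, Real.norm_eq_abs,
    sq_abs] at h
  simpa using h

private lemma sqrt_sum_vmv {n : ℕ} (u v : Fin n → ℝ) :
    Real.sqrt (∑ i, ∑ j, (vecMulVec u v) i j ^ 2) =
      Real.sqrt (∑ i, u i ^ 2) * Real.sqrt (∑ i, v i ^ 2) := by
  rw [← Real.sqrt_mul (by positivity)]
  congr 1
  rw [Finset.sum_mul_sum]
  simp [vecMulVec_apply, mul_pow]


theorem stmt3 (n k : ℕ) (x : Fin n → ℝ) (lam : ℝ)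
    (hx2 : ∑ i, x i ^ 2 = 1)
    (hx0 : (Finset.univ.filter fun i => x i ≠ 0).card = k)
    (hlam : 0 ≤ lam) :
    let s : Fin n → ℝ := fun i => Real.sign (x i)
    let X₀ : Matrix (Fin n) (Fin n) ℝ :=
      lam • vecMulVec x x +
        ((∑ i, |x i|) • (vecMulVec x s + vecMulVec s x) -
          ((∑ i, |x i|) ^ 2) • vecMulVec x x)
    Real.sqrt (∑ i, ∑ j, X₀ i j ^ 2) ≤
      lam + (∑ i, |x i|) ^ 2 + 2 * Real.sqrt k * (∑ i, |x i|) := by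
  intro s X₀
  set L : ℝ := ∑ i, |x i| with hL
  have hL0 : 0 ≤ L := Finset.sum_nonneg fun i _ => abs_nonneg _
  have hs2 : ∑ i, s i ^ 2 = (k : ℝ) := by
    have h1 : ∀ i : Fin n, s i ^ 2 = if x i ≠ 0 then (1:ℝ) else 0 := by
      intro i
      rcases lt_trichotomy (x i) 0 with h | h | h
      · simp [s, Real.sign_of_neg h, h.ne]
      · simp [s, h, Real.sign_zero]
      · simp [s, Real.sign_of_pos h, h.ne']
    rw [Finset.sum_congr rfl fun i _ => h1 i, Finset.sum_boole, hx0]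
  -- entrywise formula
  have hentry : ∀ i j, X₀ i j =
      ((lam - L ^ 2) * (x i * x j)) + (L * (x i * s j) + L * (s i * x j)) := by
    intro i j
    simp only [X₀, Matrix.add_apply, Matrix.sub_apply, Matrix.smul_apply, vecMulVec_apply,
      smul_eq_mul]
    ring
  have tri1 : Real.sqrt (∑ i, ∑ j, X₀ i j ^ 2) ≤
      Real.sqrt (∑ i, ∑ j, ((lam - L ^ 2) * (x i * x j)) ^ 2) +
        Real.sqrt (∑ i, ∑ j, (L * (x i * s j) + L * (s i * x j)) ^ 2) := by
    have h := sqrt_sum_tri (ι := Fin n × Fin n)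
      (fun p => (lam - L ^ 2) * (x p.1 * x p.2))
      (fun p => L * (x p.1 * s p.2) + L * (s p.1 * x p.2))
    rw [Fintype.sum_prod_type, Fintype.sum_prod_type, Fintype.sum_prod_type] at h
    have e : (∑ i, ∑ j, X₀ i j ^ 2) =
        ∑ i, ∑ j, ((lam - L ^ 2) * (x i * x j) + (L * (x i * s j) + L * (s i * x j))) ^ 2 :=
      Finset.sum_congr rfl fun i _ => Finset.sum_congr rfl fun j _ => by rw [hentry]
    rw [e]; exact h
  have tri2 : Real.sqrt (∑ i, ∑ j, (L * (x i * s j) + L * (s i * x j)) ^ 2) ≤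
      Real.sqrt (∑ i, ∑ j, (L * (x i * s j)) ^ 2) +
        Real.sqrt (∑ i, ∑ j, (L * (s i * x j)) ^ 2) := by
    have h := sqrt_sum_tri (ι := Fin n × Fin n)
      (fun p => L * (x p.1 * s p.2)) (fun p => L * (s p.1 * x p.2))
    rw [Fintype.sum_prod_type, Fintype.sum_prod_type, Fintype.sum_prod_type] at h
    exact h
  have hA : Real.sqrt (∑ i, ∑ j, ((lam - L ^ 2) * (x i * x j)) ^ 2) = |lam - L ^ 2| := by
    have := sqrt_sum_vmv (fun i => (lam - L ^ 2) * x i) x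
    simp only [vecMulVec_apply, mul_assoc] at this
    rw [this]
    have : ∑ i, ((lam - L ^ 2) * x i) ^ 2 = (lam - L ^ 2) ^ 2 * ∑ i, x i ^ 2 := by
      rw [Finset.mul_sum]; exact Finset.sum_congr rfl fun i _ => by ring
    rw [this, hx2, mul_one]
    simp [Real.sqrt_sq_eq_abs]
  have hB : Real.sqrt (∑ i, ∑ j, (L * (x i * s j)) ^ 2) = L * Real.sqrt k := by
    have := sqrt_sum_vmv (fun i => L * x i) s
    simp only [vecMulVec_apply, mul_assoc] at this
    rw [this]
    have h2 : ∑ i, (L * x i) ^ 2 = L ^ 2 * ∑ i, x i ^ 2 := by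
      rw [Finset.mul_sum]; exact Finset.sum_congr rfl fun i _ => by ring
    rw [h2, hx2, mul_one, hs2, Real.sqrt_sq hL0]
  have hC : Real.sqrt (∑ i, ∑ j, (L * (s i * x j)) ^ 2) = L * Real.sqrt k := by
    have := sqrt_sum_vmv (fun i => L * s i) x
    simp only [vecMulVec_apply, mul_assoc] at this
    rw [this]
    have h2 : ∑ i, (L * s i) ^ 2 = L ^ 2 * ∑ i, s i ^ 2 := by
      rw [Finset.mul_sum]; exact Finset.sum_congr rfl fun i _ => by ring
    rw [h2, hs2, hx2, Real.sqrt_one, mul_one, Real.sqrt_mul (by positivity),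
      Real.sqrt_sq hL0]
  have habs : |lam - L ^ 2| ≤ lam + L ^ 2 := by
    rw [abs_le]; constructor <;> nlinarith
  calc Real.sqrt (∑ i, ∑ j, X₀ i j ^ 2)
      ≤ _ := tri1
    _ ≤ |lam - L ^ 2| + (L * Real.sqrt k + L * Real.sqrt k) := by
        rw [hA]
        refine add_le_add le_rfl ?_
        have h := tri2
        rw [hB, hC] at h
        exact h
    _ ≤ lam + L ^ 2 + 2 * Real.sqrt k * L := by nlinarith
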